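/- For Δ = 2, the duration of a fastest temporal path from s to t in a 2-periodic temporal graph equals the duration of a fastest temporal path from t to s, whenever the underlying graph is a tree. -/

import Mathlib

/-- Travel delay: `tdelay Δ a b` for first-edge label `a`, second-edge label `b`. -/
def tdelay (Δ a b : ℤ) : ℤ := if a < b then b - a else b - a + Δ

/-- Sum of travel delays at internal vertices of a path given by its vertex list, where
`lab x y` is the (symmetric) label of edge `{x,y}`. -/
def listDelay {V : Type*} (Δ : ℤ) (lab : V → V → ℤ) : List V → ℤ
  | a :: b :: c :: rest => tdelay Δ (lab a b) (lab b c) + listDelay Δ lab (b :: c :: rest)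
  | _ => 0

/-- A labeling realizes the upper-bound matrix `D` if for all vertices `s, t`, the duration of
the fastest temporal path from `s` to `t`, which in a tree equals `1` plus the sum of travel
delays along the unique `s`-`t` path, is at most `D s t`. -/
def Realizes {V : Type*} (G : SimpleGraph V) (Δ : ℤ) (lab : V → V → ℤ)
    (D : V → V → ℤ) : Prop :=
  ∀ s t (p : G.Walk s t), p.IsPath → 1 + listDelay Δ lab p.support ≤ D s t

/-- Pairwise sum of travel delays over a list of labels. -/
def pairSum (Δ : ℤ) : List ℤ → ℤ
  | x :: y :: rest => tdelay Δ x y + pairSum Δ (y :: rest)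
  | _ => 0

/-- Edge labels along a vertex list. -/
def edges {V : Type*} (lab : V → V → ℤ) : List V → List ℤ
  | a :: b :: rest => lab a b :: edges lab (b :: rest)
  | _ => []

lemma listDelay_eq_pairSum {V : Type*} (Δ : ℤ) (lab : V → V → ℤ) :
    ∀ l : List V, listDelay Δ lab l = pairSum Δ (edges lab l)
  | [] => rfl
  | [_] => rfl
  | [_, _] => rfl
  | a :: b :: c :: rest => by
    simp only [listDelay, edges, pairSum]
    rw [listDelay_eq_pairSum Δ lab (b :: c :: rest)]
    rfl

lemma pairSum_append (Δ : ℤ) :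
    ∀ (l : List ℤ) (y x : ℤ),
      pairSum Δ (l ++ [y, x]) = pairSum Δ (l ++ [y]) + tdelay Δ y x
  | [], y, x => by simp [pairSum]
  | [a], y, x => by simp only [pairSum, List.cons_append, List.nil_append]; ring
  | a :: b :: l, y, x => by
    simp only [List.cons_append, List.append_eq, pairSum]
    rw [← List.cons_append, ← List.cons_append, pairSum_append Δ (b :: l) y x]
    ring

lemma edges_append {V : Type*} (lab : V → V → ℤ) :
    ∀ (l : List V) (y x : V),
      edges lab (l ++ [y, x]) = edges lab (l ++ [y]) ++ [lab y x]
  | [], y, x => rfl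
  | [a], y, x => rfl
  | a :: b :: l, y, x => by
    simp only [List.cons_append, List.append_eq, edges]
    rw [← List.cons_append, ← List.cons_append, edges_append lab (b :: l) y x]
    rfl

lemma edges_reverse {V : Type*} (lab : V → V → ℤ)
    (hsym : ∀ x y, lab x y = lab y x) :
    ∀ l : List V, edges lab l.reverse = (edges lab l).reverse
  | [] => rfl
  | [_] => rfl
  | a :: b :: l => by
    have h1 : (a :: b :: l).reverse = l.reverse ++ [b, a] := by simp
    have h2 : (b :: l).reverse = l.reverse ++ [b] := by simp
    rw [h1, edges_append, ← h2, edges_reverse lab hsym (b :: l)]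
    simp [edges, hsym a b]

lemma tdelay_symm_of_range (a b : ℤ) (ha : a = 1 ∨ a = 2) (hb : b = 1 ∨ b = 2) :
    tdelay 2 a b = tdelay 2 b a := by
  rcases ha with rfl | rfl <;> rcases hb with rfl | rfl <;> decide

lemma pairSum_reverse (m : List ℤ) (hm : ∀ x ∈ m, x = 1 ∨ x = 2) :
    pairSum 2 m.reverse = pairSum 2 m := by
  induction m with
  | nil => rfl
  | cons a r ih =>
    match r, ih with
    | [], _ => rfl
    | b :: r, ih =>
      have h1 : (a :: b :: r).reverse = r.reverse ++ [b, a] := by simp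
      have h2 : (b :: r).reverse = r.reverse ++ [b] := by simp
      rw [h1, pairSum_append, ← h2, ih (fun x hx => hm x (List.mem_cons_of_mem _ hx)),
        tdelay_symm_of_range b a (hm b (by simp)) (hm a (by simp))]
      simp [pairSum]; ring

lemma edges_mem {V : Type*} (G : SimpleGraph V) (lab : V → V → ℤ)
    (hrange : ∀ x y, G.Adj x y → lab x y = 1 ∨ lab x y = 2) :
    ∀ l : List V, l.Chain' G.Adj → ∀ x ∈ edges lab l, x = 1 ∨ x = 2
  | [], _, x, hx => by simp [edges] at hx
  | [_], _, x, hx => by simp [edges] at hx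
  | a :: b :: l, hc, x, hx => by
    rw [List.Chain', List.isChain_cons_cons] at hc
    simp only [edges, List.mem_cons] at hx
    rcases hx with rfl | hx
    · exact hrange a b hc.1
    · exact edges_mem G lab hrange (b :: l) hc.2 x hx

/-- for `Δ = 2` on a tree, the duration of a fastest temporal path from `s` to
`t` (namely `1` plus the sum of travel delays along the unique `s`-`t` path) equals the
duration of a fastest temporal path from `t` to `s`. -/
theorem delta_two_duration_symmetric {V : Type*} (G : SimpleGraph V) (hT : G.IsTree)
    (lab : V → V → ℤ) (hsym : ∀ x y, lab x y = lab y x)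
    (hrange : ∀ x y, G.Adj x y → lab x y = 1 ∨ lab x y = 2)
    (s t : V) (p : G.Walk s t) (hp : p.IsPath) :
    1 + listDelay 2 lab p.support = 1 + listDelay 2 lab p.reverse.support := by
  rw [SimpleGraph.Walk.support_reverse, listDelay_eq_pairSum, listDelay_eq_pairSum,
    edges_reverse lab hsym,
    pairSum_reverse _ (edges_mem G lab hrange p.support p.isChain_adj_support)]
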